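/- Let O be a commutative ring, G a finite group, and I a saturated right ideal of O[G]. Then I = {α ∈ O[G] : β·α = 0 for every β ∈ I^⊥}. -/

import Mathlib

open MonoidAlgebra MulOpposite

/-- The left annihilator `I^⊥ = {β : β·I = 0}` of a right ideal `I` of the
group ring `O[G]`, as an `O`-submodule of `O[G]`. -/
def leftAnnihilator (O : Type*) [CommRing O] (G : Type*) [Group G]
    (I : Submodule (MonoidAlgebra O G)ᵐᵒᵖ (MonoidAlgebra O G)) :
    Submodule O (MonoidAlgebra O G) where
  carrier := {β | ∀ x ∈ I, β * x = 0}
  add_mem' := by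
    intro a b ha hb x hx
    rw [add_mul, ha x hx, hb x hx, add_zero]
  zero_mem' := by
    intro x hx
    rw [zero_mul]
  smul_mem' := by
    intro c a ha x hx
    rw [smul_mul_assoc, ha x hx, smul_zero]

/-- If `I` is a saturated right ideal of `O[G]` (i.e. `O[G]/I`
is a projective `O`-module), then `I = {α : β·α = 0 for all β ∈ I^⊥}`. -/
theorem stmt_3 (O : Type*) [CommRing O] (G : Type*) [Group G] [Finite G]
    (I : Submodule (MonoidAlgebra O G)ᵐᵒᵖ (MonoidAlgebra O G))
    (hsat : Module.Projective O (MonoidAlgebra O G ⧸ I)) :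
    ∀ α : MonoidAlgebra O G,
      α ∈ I ↔ ∀ β ∈ leftAnnihilator O G I, β * α = 0 := by
  intro α
  constructor
  · intro hα β hβ; exact hβ α hα
  · intro h
    have := Fintype.ofFinite G
    classical
    -- expansion of f along the basis of group elements
    have hy : ∀ (f : MonoidAlgebra O G →ₗ[O] O) (y : MonoidAlgebra O G),
        f y = ∑ k : G, y.coeff k * f (single k (1:O)) := by
      intro f y
      conv_lhs => rw [← MonoidAlgebra.sum_coeff_single y, Finsupp.sum_fintype _ _ (by simp)]
      rw [map_sum]
      refine Finset.sum_congr rfl fun k _ => ?_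
      have h1 : MonoidAlgebra.single k (y.coeff k) = y.coeff k • MonoidAlgebra.single k (1:O) := by
        rw [MonoidAlgebra.smul_single, smul_eq_mul, mul_one]
      rw [h1, map_smul, smul_eq_mul]
    -- key: any O-linear functional vanishing on I kills α
    have key : ∀ f : MonoidAlgebra O G →ₗ[O] O, (∀ x ∈ I, f x = 0) → f α = 0 := by
      intro f hf
      set β : MonoidAlgebra O G := ∑ h : G, f (single h (1:O)) • single h⁻¹ (1:O) with hβdef
      have hcoef : ∀ (x : MonoidAlgebra O G) (g : G),
          (β * x).coeff g = f (op (single g⁻¹ (1:O)) • x) := by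
        intro x g
        rw [op_smul_eq_mul, hy f]
        rw [hβdef, Finset.sum_mul]
        rw [MonoidAlgebra.coeff_sum, Finsupp.finset_sum_apply]
        refine Finset.sum_congr rfl fun k _ => ?_
        rw [smul_mul_assoc, MonoidAlgebra.coeff_smul_apply, smul_eq_mul,
          MonoidAlgebra.coeff_single_mul_apply, MonoidAlgebra.coeff_mul_single_apply,
          inv_inv, inv_inv, mul_one, one_mul, mul_comm]
      have hβmem : ∀ x ∈ I, β * x = 0 := by
        intro x hx
        ext g
        rw [hcoef x g]
        simpa using hf _ (I.smul_mem (op (single g⁻¹ (1:O))) hx)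
      have h1 : (β * α).coeff 1 = 0 := by rw [h β hβmem]; simp
      rw [hcoef α 1, op_smul_eq_mul, inv_one, ← MonoidAlgebra.one_def, mul_one] at h1
      exact h1
    -- use projectivity to get a section of the quotient map
    set π := (I.mkQ).restrictScalars O with hπdef
    obtain ⟨s, hs⟩ := Module.projective_lifting_property π LinearMap.id
      (fun q => by obtain ⟨x, hx⟩ := Submodule.mkQ_surjective I q; exact ⟨x, hx⟩)
    have hsπ : ∀ g : G, (((Finsupp.lapply g).comp (MonoidAlgebra.coeffLinearEquiv O).toLinearMap : MonoidAlgebra O G →ₗ[O] O) ∘ₗ s ∘ₗ π) α = 0 := by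
      intro g
      apply key
      intro x hx
      simp only [LinearMap.comp_apply, hπdef, LinearMap.restrictScalars_apply,
        Submodule.mkQ_apply]
      rw [(Submodule.Quotient.mk_eq_zero I).2 hx]
      simp
    have hsα : s (π α) = 0 := by
      ext g
      simpa using hsπ g
    have hπα : π α = 0 := by
      have := congrArg (fun m => m (π α)) hs
      simp only [LinearMap.comp_apply, LinearMap.id_apply] at this
      rw [← this, hsα, map_zero]
    have : Submodule.Quotient.mk (p := I) α = 0 := hπα
    exact (Submodule.Quotient.mk_eq_zero I).1 this
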